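/- Let T be a t-norm and let R be a fuzzy T-equivalence on a set U with a dually well-ordered spectrum. Then for any subset A ⊆ U, A_E = {x ∈ U | μ_{[A]_R}(x) > 0}; that is, the lower approximation of A by the crisp equivalence E equals the support of the fuzzy lower approximation of A. -/
import Mathlib


open unitInterval

noncomputable section

instance : Fact ((0:ℝ) ≤ 1) := ⟨zero_le_one⟩

/-- A t-norm on the unit interval: commutative, associative, monotone in each
argument, with `1` as unit. -/
def IsTnorm (T : I → I → I) : Prop :=
  (∀ x y, T x y = T y x) ∧
  (∀ x y z, T (T x y) z = T x (T y z)) ∧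
  (∀ x₁ x₂ y, x₁ ≤ x₂ → T x₁ y ≤ T x₂ y) ∧
  (∀ x y₁ y₂, y₁ ≤ y₂ → T x y₁ ≤ T x y₂) ∧
  (∀ x, T x 1 = x)

/-- A fuzzy `T`-equivalence: reflexive, symmetric, `T`-transitive fuzzy relation. -/
def IsFuzzyTEquiv {U : Type*} (T : I → I → I) (μ : U → U → I) : Prop :=
  (∀ x, μ x x = 1) ∧ (∀ x y, μ x y = μ y x) ∧ (∀ x y z, T (μ x y) (μ y z) ≤ μ x z)

/-- Fuzzy upper approximation of a crisp set `A`: `sup {μ x y | y ∈ A}` (`sup ∅ = 0`). -/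
def upperApp {U : Type*} (μ : U → U → I) (A : Set U) (x : U) : I := sSup (μ x '' A)

/-- Fuzzy lower approximation of a crisp set `A`: `inf {1 - μ x y | y ∉ A}` (`inf ∅ = 1`). -/
def lowerApp {U : Type*} (μ : U → U → I) (A : Set U) (x : U) : I :=
  sInf ((fun y => σ (μ x y)) '' Aᶜ)

/-- The spectrum of a fuzzy relation. -/
def fuzzySpectrum {U : Type*} (μ : U → U → I) : Set I := {r | ∃ x y, μ x y = r}

/-- `R` has a dually well-ordered spectrum: every nonempty subset of the
spectrum has a greatest element. -/
def DuallyWellOrdered {U : Type*} (μ : U → U → I) : Prop :=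
  ∀ s ⊆ fuzzySpectrum μ, s.Nonempty → ∃ m ∈ s, ∀ r ∈ s, r ≤ m

/-- Upper approximation by the crisp equivalence `E = {(x,y) | μ x y = 1}`. -/
def upperE {U : Type*} (μ : U → U → I) (A : Set U) : Set U :=
  {x | ({y | μ x y = 1} ∩ A).Nonempty}

/-- Lower approximation by the crisp equivalence `E = {(x,y) | μ x y = 1}`. -/
def lowerE {U : Type*} (μ : U → U → I) (A : Set U) : Set U :=
  {x | {y | μ x y = 1} ⊆ A}

/-- Upper approximation by the support relation `S = {(x,y) | μ x y > 0}`. -/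
def upperS {U : Type*} (μ : U → U → I) (A : Set U) : Set U :=
  {x | ({y | 0 < μ x y} ∩ A).Nonempty}

/-- Lower approximation by the support relation `S = {(x,y) | μ x y > 0}`. -/
def lowerS {U : Type*} (μ : U → U → I) (A : Set U) : Set U :=
  {x | {y | 0 < μ x y} ⊆ A}

/-- `A_E` equals the support of the fuzzy lower approximation of `A`. -/
theorem stmt2 {U : Type*} (T : I → I → I) (μ : U → U → I)
    (hT : IsTnorm T) (hR : IsFuzzyTEquiv T μ) (hD : DuallyWellOrdered μ)
    (A : Set U) :
    lowerE μ A = {x | 0 < lowerApp μ A x} := by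
  ext x
  simp only [lowerE, lowerApp, Set.mem_setOf_eq]
  constructor
  · intro hx
    rcases Set.eq_empty_or_nonempty (Aᶜ) with hAc | hAc
    · rw [hAc]
      simp only [Set.image_empty, sInf_empty]
      exact lt_of_lt_of_le zero_lt_one le_top
    · set s : Set I := μ x '' Aᶜ with hs
      have hsub : s ⊆ fuzzySpectrum μ := by
        rintro r ⟨y, _, rfl⟩; exact ⟨x, y, rfl⟩
      obtain ⟨m, ⟨y, hy, hmy⟩, hmax⟩ := hD s hsub (hAc.image _)
      have hm1 : m < 1 :=
        lt_of_le_of_ne le_one' fun h => hy (hx (by rw [Set.mem_setOf_eq, hmy, h]))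
      have h0 : (0 : I) < σ m := by
        have : σ (1 : I) < σ m := symm_lt_symm.mpr hm1
        simpa using this
      refine lt_of_lt_of_le h0 (le_sInf ?_)
      rintro b ⟨z, hz, rfl⟩
      exact symm_le_symm.mpr (hmax _ ⟨z, hz, rfl⟩)
  · intro hx y hy
    by_contra hyA
    have : sInf ((fun y => σ (μ x y)) '' Aᶜ) ≤ σ (μ x y) :=
      sInf_le ⟨y, hyA, rfl⟩
    rw [Set.mem_setOf_eq] at hy
    rw [hy] at this
    simp at this
    rw [this] at hx
    exact lt_irrefl _ hx
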